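/- The compatibility condition holds under the SMP relations: if q_{2n}=p_{2n}p_{2n+1}/r_{2n+1} for all n (r_{2n+1}>0), D_k ≠ 0, ρ_{2k}=r_{2k-1}r_{2k+1}/D_k, ρ_{2k+1}=0, π_{2k+1}=-p_{2k+3}ρ_{2k+2}/r_{2k+3}, π_{2k}=-p_{2k-2}ρ_{2k}/r_{2k-1}, then p_{2n+1}(π_{2n+1}r_{2n+1}+q_{2n-1}π_{2n}+p_{2n-1}ρ_{2n}) = p_{2n}(π_{2n}r_{2n+1}+q_{2n+1}π_{2n+1}+p_{2n+2}ρ_{2n+2}) for all n ∈ ℤ. -/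
import Mathlib


theorem smp_compatibility_condition
    (p q r ρ π D : ℤ → ℝ)
    (hre : ∀ n : ℤ, r (2 * n) = 0) (hro : ∀ n : ℤ, 0 < r (2 * n + 1))
    (hq : ∀ n : ℤ, q (2 * n) = p (2 * n) * p (2 * n + 1) / r (2 * n + 1))
    (hD : ∀ n : ℤ, D n = q (2 * n - 1) * p (2 * n - 2) * p (2 * n + 1)
      - p (2 * n - 2) * p (2 * n) * r (2 * n + 1)
      - p (2 * n - 1) * p (2 * n + 1) * r (2 * n - 1))
    (hDne : ∀ n : ℤ, D n ≠ 0)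
    (hρo : ∀ n : ℤ, ρ (2 * n + 1) = 0)
    (hρe : ∀ n : ℤ, ρ (2 * n) = r (2 * n - 1) * r (2 * n + 1) / D n)
    (hπo : ∀ n : ℤ, π (2 * n + 1) = -(p (2 * n + 3) * ρ (2 * n + 2)) / r (2 * n + 3))
    (hπe : ∀ n : ℤ, π (2 * n) = -(p (2 * n - 2) * ρ (2 * n)) / r (2 * n - 1)) :
    ∀ n : ℤ, p (2 * n + 1) * (π (2 * n + 1) * r (2 * n + 1)
        + q (2 * n - 1) * π (2 * n) + p (2 * n - 1) * ρ (2 * n))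
      = p (2 * n) * (π (2 * n) * r (2 * n + 1)
        + q (2 * n + 1) * π (2 * n + 1) + p (2 * n + 2) * ρ (2 * n + 2)) := by
  intro n
  have e1 : (2 : ℤ) * (n + 1) + 1 = 2 * n + 3 := by ring
  have e2 : (2 : ℤ) * (n - 1) + 1 = 2 * n - 1 := by ring
  have e3 : (2 : ℤ) * (n + 1) - 1 = 2 * n + 1 := by ring
  have e4 : (2 : ℤ) * (n + 1) - 2 = 2 * n := by ring
  have e5 : (2 : ℤ) * (n + 1) = 2 * n + 2 := by ring
  have hr1 : r (2 * n + 1) ≠ 0 := (hro n).ne'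
  have hr3 : r (2 * n + 3) ≠ 0 := by have := (hro (n + 1)).ne'; rwa [e1] at this
  have hrm1 : r (2 * n - 1) ≠ 0 := by have := (hro (n - 1)).ne'; rwa [e2] at this
  have hD0 := hDne n
  have hD1 := hDne (n + 1)
  have hρ2 : ρ (2 * n + 2) = r (2 * n + 1) * r (2 * n + 3) / D (n + 1) := by
    have := hρe (n + 1); rwa [e1, e3, e5] at this
  have hD1' : D (n + 1) = q (2 * n + 1) * p (2 * n) * p (2 * n + 3)
      - p (2 * n) * p (2 * n + 2) * r (2 * n + 3)
      - p (2 * n + 1) * p (2 * n + 3) * r (2 * n + 1) := by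
    have := hD (n + 1); rwa [e1, e3, e4, e5] at this
  rw [hπo n, hπe n, hρe n, hρ2]
  field_simp
  rw [hD n, hD1']
  ring
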